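/- Let η_S, η_D ∈ [0,1), π_S, π_D > 0 with π_S+π_D=1, and let π_S^η = (1-η_S)π_S + η_D·π_D, π_D^η = η_S·π_S + (1-η_D)π_D, and C = π_S^η·((1-η_S)π_D + η_D·π_S) / (π_D^η·(η_S·π_D + (1-η_D)π_S)). Then ((1-η_S)π_S^η - η_S·π_D^η·C)/π_S = ((1-η_D)π_D^η·C - η_D·π_S^η)/π_D. -/

import Mathlib

/-- With SD-conditional noise rates `ηS, ηD ∈ [0,1)`, clean priors
`πS, πD > 0`, `πS+πD=1`, noisy priors `πSη, πDη` and scaling constant `C` as defined,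
`((1-ηS)πSη - ηS·πDη·C)/πS = ((1-ηD)πDη·C - ηD·πSη)/πD`. -/
theorem conditional_noise_coeffs_equal
    (ηS ηD πS πD : ℝ)
    (hηS : ηS ∈ Set.Ico (0 : ℝ) 1) (hηD : ηD ∈ Set.Ico (0 : ℝ) 1)
    (hS : 0 < πS) (hD : 0 < πD) (h1 : πS + πD = 1)
    (πSη πDη C : ℝ)
    (hSη : πSη = (1 - ηS) * πS + ηD * πD)
    (hDη : πDη = ηS * πS + (1 - ηD) * πD)
    (hden : πDη * (ηS * πD + (1 - ηD) * πS) ≠ 0)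
    (hC : C = πSη * ((1 - ηS) * πD + ηD * πS) / (πDη * (ηS * πD + (1 - ηD) * πS))) :
    ((1 - ηS) * πSη - ηS * πDη * C) / πS =
      ((1 - ηD) * πDη * C - ηD * πSη) / πD := by
  have hD2 : (ηS * πD + (1 - ηD) * πS) ≠ 0 := fun h => hden (by rw [h]; ring)
  have hDη0 : πDη ≠ 0 := fun h => hden (by rw [h]; ring)
  subst hC hSη hDη
  have h3 : ηS * πS + πD * (1 - ηD) ≠ 0 := by rwa [mul_comm πD]
  have h4 : ηS * πD + πS * (1 - ηD) ≠ 0 := by rwa [mul_comm πS]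
  field_simp
  ring_nf
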